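/- In the setting of the strongly quasihereditary theorem above, if additionally each approximation target Mᵢ' is indecomposable or zero, then each indecomposable projective Γ-module Hom_C(Mᵢ, M) has a unique Δ-composition series (Γ is Δ-serial). -/

import Mathlib

open CategoryTheory CategoryTheory.Limits

attribute [local instance] CategoryTheory.Limits.HasFiniteBiproducts.of_hasFiniteProducts
attribute [local instance] CategoryTheory.Limits.hasBinaryBiproducts_of_finite_biproducts

/-!
STATEMENT 6. In the setting of the strongly quasihereditary theorem (Statement 5),
if additionally each approximation target Mᵢ' is indecomposable or zero, then each
indecomposable projective Γ-module Hom_C(Mᵢ, M) has a unique Δ-composition series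
(Γ is Δ-serial).  Uniqueness is expressed as: any two Δ-filtrations of Hom_C(Mᵢ, M)
consist of the same chain of submodules.
-/

universe v u

noncomputable instance homEndModule {𝒜 : Type u} [Category.{v} 𝒜] [Abelian 𝒜] (X M : 𝒜) :
    Module (End M) (X ⟶ M) where
  smul γ φ := φ ≫ γ
  one_smul φ := Category.comp_id φ
  mul_smul γ δ φ := (Category.assoc φ δ γ).symm
  smul_zero _ := Limits.zero_comp
  smul_add _ _ _ := Preadditive.add_comp _ _ _ _ _ _
  add_smul _ _ _ := Preadditive.comp_add _ _ _ _ _ _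
  zero_smul _ := Limits.comp_zero

def pdLE (R : Type v) [Ring R] : ℕ → ModuleCat.{v} R → Prop
  | 0, D => Module.Projective R D
  | n + 1, D => ∃ (P : ModuleCat.{v} R) (p : P →ₗ[R] D), Module.Projective R P ∧
      Function.Surjective p ∧ pdLE R n (ModuleCat.of R (LinearMap.ker p))

def BelowAdd {𝒜 : Type u} [Category.{v} 𝒜] [Abelian 𝒜] {n : ℕ} (Mi : Fin n → 𝒜)
    (i : Fin n) (X : 𝒜) : Prop :=
  ∃ (m : ℕ) (s : X ⟶ ⨁ fun q : Fin m × {j : Fin n // j < i} => Mi q.2.1)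
    (r : (⨁ fun q : Fin m × {j : Fin n // j < i} => Mi q.2.1) ⟶ X), s ≫ r = 𝟙 X

/-- `c` is a `Δ`-composition series of the module `X`. -/
def IsDeltaFiltration {R : Type v} [Ring R] {n : ℕ} (Δ : Fin n → ModuleCat.{v} R)
    {X : ModuleCat.{v} R} {m : ℕ} (c : Fin (m + 1) → Submodule R X) : Prop :=
  Monotone c ∧ c 0 = ⊥ ∧ c (Fin.last m) = ⊤ ∧
    ∀ l : Fin m, ∃ j : Fin n,
      Nonempty ((↥(c l.succ) ⧸ Submodule.comap (c l.succ).subtype (c l.castSucc)) ≃ₗ[R] Δ j)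

section RingAux

open Polynomial

variable {k : Type v} [Field k]

theorem aux_monic_decomp : ∀ N (p : k[X]), p.natDegree ≤ N → p.Monic →
    ∃ (m : ℕ) (q : k[X]), p = X ^ m * q ∧ q.Monic ∧ q.coeff 0 ≠ 0 := by
  intro N
  induction N with
  | zero =>
    intro p hd hm
    refine ⟨0, p, by simp, hm, ?_⟩
    have : p = 1 := hm.natDegree_eq_zero.mp (Nat.le_zero.mp hd)
    simp [this]
  | succ N ih =>
    intro p hd hm
    by_cases h0 : p.coeff 0 = 0
    · have hp : X * p.divX = p := by
        have := X_mul_divX_add p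
        rw [h0] at this; simpa using this
      have hdeg1 : 1 ≤ p.natDegree := by
        by_contra hc
        have : p.natDegree = 0 := by omega
        have : p = 1 := hm.natDegree_eq_zero.mp this
        rw [this] at h0; simp at h0
      have hdd : p.divX.natDegree ≤ N := by
        have := natDegree_divX_eq_natDegree_tsub_one (p := p)
        omega
      have hmq : p.divX.Monic := by
        have : (X * p.divX).Monic := by rwa [hp]
        exact (monic_X).of_mul_monic_left this
      obtain ⟨m, q, he, hq, hq0⟩ := ih p.divX hdd hmq
      exact ⟨m + 1, q, by rw [← hp, he]; ring, hq, hq0⟩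
    · exact ⟨0, p, by simp, hm, h0⟩

theorem aux_nilpotent_or_unit {R : Type v} [Ring R] [Nontrivial R] [Algebra k R]
    [FiniteDimensional k R] (hId : ∀ e : R, e * e = e → e = 0 ∨ e = 1) (a : R) :
    IsNilpotent a ∨ IsUnit a := by
  have hint : IsIntegral k a := IsIntegral.of_finite k a
  have hm : (minpoly k a).Monic := minpoly.monic hint
  obtain ⟨m, q, hdecomp, hqm, hq0⟩ :=
    aux_monic_decomp (minpoly k a).natDegree (minpoly k a) le_rfl hm
  have hpa : aeval a (minpoly k a) = 0 := minpoly.aeval k a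
  rcases Nat.eq_zero_or_pos m with hm0 | hmpos
  · -- coeff 0 ≠ 0 : a is a unit
    right
    set c := (minpoly k a).coeff 0 with hc
    have hc0 : c ≠ 0 := by
      rw [hc, hdecomp, hm0]; simpa using hq0
    set w := aeval a (minpoly k a).divX with hw
    have hcomm : a * w = w * a := by
      have h1 : aeval a (X * (minpoly k a).divX) = a * w := by rw [map_mul, aeval_X]
      have h2 : aeval a ((minpoly k a).divX * X) = w * a := by rw [map_mul, aeval_X]
      rw [← h1, ← h2, mul_comm]
    have h3 : a * w + algebraMap k R c = 0 := by
      have h2 := congrArg (aeval a) (X_mul_divX_add (minpoly k a))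
      rw [hpa, map_add, map_mul, aeval_X, aeval_C] at h2
      rw [hw, h2]
    set b := algebraMap k R (-c⁻¹) with hb
    have hab : a * (w * b) = 1 := by
      rw [← mul_assoc]
      have : a * w = algebraMap k R (-c) := by
        rw [map_neg]
        have := eq_neg_of_add_eq_zero_left h3
        simpa using this
      rw [this, hb, ← map_mul]
      rw [show (-c) * (-c⁻¹) = c * c⁻¹ by ring, mul_inv_cancel₀ hc0, map_one]
    have hba : (w * b) * a = 1 := by
      have hcent : ∀ x : R, x * b = b * x := fun x => (Algebra.commutes (-c⁻¹) x).symm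
      rw [mul_assoc, ← hcent a, ← mul_assoc, ← hcomm, mul_assoc, hab]
    exact ⟨⟨a, w * b, hab, hba⟩, rfl⟩
  · rcases eq_or_ne q 1 with hq1 | hq1
    · left
      refine ⟨m, ?_⟩
      rw [hdecomp, hq1, mul_one] at hpa
      simpa using hpa
    · exfalso
      have hqd : q.natDegree ≠ 0 := fun hdeg => hq1 (hqm.natDegree_eq_zero.mp hdeg)
      have hcop : IsCoprime ((X : k[X]) ^ m) q := by
        refine IsCoprime.pow_left ?_
        refine ⟨-(C (q.coeff 0)⁻¹) * q.divX, C (q.coeff 0)⁻¹, ?_⟩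
        have h2 : X * q.divX + C (q.coeff 0) = q := X_mul_divX_add q
        have hCc : C (q.coeff 0)⁻¹ * C (q.coeff 0) = 1 := by
          rw [← C_mul, inv_mul_cancel₀ hq0, C_1]
        linear_combination (C (q.coeff 0)⁻¹) * h2.symm + hCc
      obtain ⟨u, v, huv⟩ := hcop
      have hpoly : (v * q) * (v * q) - (v * q) = (-(v * u)) * (minpoly k a) := by
        rw [hdecomp]; linear_combination (v*q) * huv
      set e := aeval a (v * q) with he
      have hidem : e * e = e := by
        have h9 : e * e - e = aeval a ((-(v * u)) * (minpoly k a)) := by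
          rw [he, ← map_mul, ← map_sub]; exact congrArg (aeval a) hpoly
        rw [map_mul, hpa, mul_zero] at h9
        exact sub_eq_zero.mp h9
      rcases hId e hidem with h | h
      · -- e = 0 ⇒ X^m ∣ v ⇒ X ∣ 1, absurd
        have hdvd : minpoly k a ∣ v * q := minpoly.dvd k a (by rw [← he, h])
        rw [hdecomp] at hdvd
        have hq_ne : q ≠ 0 := hqm.ne_zero
        obtain ⟨w, hwq⟩ : (X : k[X]) ^ m ∣ v := by
          rcases hdvd with ⟨w, hw⟩
          refine ⟨w, mul_right_cancel₀ hq_ne ?_⟩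
          rw [hw]; ring
        have hX1 : (X : k[X]) ∣ 1 := by
          refine ⟨X ^ (m - 1) * (u + w * q), ?_⟩
          rw [← huv, hwq]
          have hXm : (X : k[X]) * X ^ (m-1) = X ^ m := by
            rw [← pow_succ']; congr 1; omega
          linear_combination (u + w * q) * hXm.symm
        have := X_dvd_iff.mp hX1
        simp at this
      · -- e = 1 ⇒ q ∣ 1, absurd
        have hdvd : minpoly k a ∣ v * q - 1 :=
          minpoly.dvd k a (by rw [map_sub, map_one, ← he, h, sub_self])
        rw [hdecomp] at hdvd
        rcases hdvd with ⟨w, hw⟩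
        have hqd1 : q ∣ 1 := ⟨v - X ^ m * w, by linear_combination -hw⟩
        exact hqd (natDegree_eq_zero_of_isUnit (isUnit_of_dvd_one hqd1))

theorem aux_nonunit_add {R : Type v} [Ring R]
    (H : ∀ a : R, IsNilpotent a ∨ IsUnit a) {a b : R}
    (ha : ¬IsUnit a) (hb : ¬IsUnit b) : ¬IsUnit (a + b) := by
  intro hs
  rcases hs with ⟨s, hs⟩
  have h1 : a * ↑s⁻¹ + b * ↑s⁻¹ = 1 := by
    rw [← add_mul, ← hs, Units.mul_inv]
  have h2 : ¬IsUnit (a * ↑s⁻¹) := by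
    intro h
    exact ha (by simpa [mul_assoc] using h.mul (s⁻¹⁻¹).isUnit)
  have h3 : IsNilpotent (a * ↑s⁻¹) := (H _).resolve_right h2
  have h4 : IsUnit (b * ↑s⁻¹) := by
    have : b * ↑s⁻¹ = 1 - a * ↑s⁻¹ := eq_sub_of_add_eq' h1
    rw [this]
    exact h3.isUnit_one_sub
  exact hb (by simpa [mul_assoc] using h4.mul s.isUnit)

theorem aux_nonunit_sum {R : Type v} [Ring R] [Nontrivial R]
    (H : ∀ a : R, IsNilpotent a ∨ IsUnit a) {ι : Type*} (s : Finset ι) (u : ι → R)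
    (h : ∀ q ∈ s, ¬IsUnit (u q)) : ¬IsUnit (∑ q ∈ s, u q) := by
  classical
  induction s using Finset.induction_on with
  | empty => simpa using not_isUnit_zero
  | @insert a t hq ih =>
    rw [Finset.sum_insert hq]
    exact aux_nonunit_add H (h a (Finset.mem_insert_self a t))
      (ih fun q hqt => h q (Finset.mem_insert_of_mem hqt))
end RingAux


section CatAux

variable {𝒜 : Type u} [Category.{v} 𝒜] [Abelian 𝒜]

theorem homEnd_smul_def {A M : 𝒜} (γ : End M) (φ : A ⟶ M) : γ • φ = φ ≫ γ := rfl

/-- Reinterpret an endomorphism as an element of the endomorphism monoid. -/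
def asEnd {A : 𝒜} (e : A ⟶ A) : End A := e

@[simp] theorem asEnd_def {A : 𝒜} (e : A ⟶ A) : asEnd e = e := rfl

/-- Composition on the left as an `End M`-linear map between hom-modules. -/
noncomputable def precompLM {A B M : 𝒜} (d : B ⟶ A) : (A ⟶ M) →ₗ[End M] (B ⟶ M) where
  toFun φ := d ≫ φ
  map_add' _ _ := Preadditive.comp_add _ _ _ _ _ _
  map_smul' γ φ := by simp [homEnd_smul_def]

@[simp] theorem precompLM_apply {A B M : 𝒜} (d : B ⟶ A) (φ : A ⟶ M) :
    precompLM d φ = d ≫ φ := rfl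

/-- Any `End M`-linear map out of `(A ⟶ M)`, where `A` is a retract of `M`,
is given by precomposition. -/
theorem rep_of_linear {A M : 𝒜} (ιA : A ⟶ M) (πA : M ⟶ A) (h : ιA ≫ πA = 𝟙 A)
    {V : Type v} [AddCommGroup V] [Module (End M) V]
    (L : (A ⟶ M) →ₗ[End M] V) (φ : A ⟶ M) : L φ = (show End M from πA ≫ φ) • (L ιA) := by
  have : φ = (show End M from πA ≫ φ) • ιA := by
    rw [homEnd_smul_def]
    rw [← Category.assoc, h, Category.id_comp]
  conv_lhs => rw [this]
  rw [map_smul]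

/-- The idempotents of an indecomposable object of an abelian category are trivial. -/
theorem idem_trivial {A : 𝒜} (hA : Indecomposable A) (e : A ⟶ A) (he : e ≫ e = e) :
    e = 0 ∨ e = 𝟙 A := by
  obtain ⟨Y, iY, pY, hY1, hY2⟩ := IsIdempotentComplete.idempotents_split A e he
  have he' : (𝟙 A - e) ≫ (𝟙 A - e) = 𝟙 A - e := by
    simp [Preadditive.sub_comp, Preadditive.comp_sub, he]
  obtain ⟨Z, iZ, pZ, hZ1, hZ2⟩ :=
    IsIdempotentComplete.idempotents_split A (𝟙 A - e) he'
  have hiYp : iY ≫ pZ = 0 := by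
    have h1 : iY ≫ (𝟙 A - e) = 0 := by
      have : iY ≫ e = iY := by
        have := hY1
        calc iY ≫ e = iY ≫ pY ≫ iY := by rw [hY2]
        _ = (iY ≫ pY) ≫ iY := by rw [Category.assoc]
        _ = iY := by rw [hY1, Category.id_comp]
      simp [Preadditive.comp_sub, this]
    have : iY ≫ (pZ ≫ iZ) = 0 := by rw [hZ2]; exact h1
    have h2 : (iY ≫ pZ) ≫ iZ = 0 := by rw [Category.assoc]; exact this
    have : Mono iZ := by
      constructor
      intro W a b hab
      have : a ≫ iZ ≫ pZ = b ≫ iZ ≫ pZ := by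
        rw [← Category.assoc, ← Category.assoc, hab]
      simpa [hZ1] using this
    exact (cancel_mono iZ).mp (by simpa using h2)
  have hiZp : iZ ≫ pY = 0 := by
    have h1 : iZ ≫ e = 0 := by
      have : iZ ≫ (𝟙 A - e) = iZ := by
        calc iZ ≫ (𝟙 A - e) = iZ ≫ pZ ≫ iZ := by rw [hZ2]
        _ = (iZ ≫ pZ) ≫ iZ := by rw [Category.assoc]
        _ = iZ := by rw [hZ1, Category.id_comp]
      have h2 := this
      have : iZ ≫ 𝟙 A - iZ ≫ e = iZ := by
        rw [← Preadditive.comp_sub]; exact h2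
      simp only [Category.comp_id] at this
      linear_combination (norm := abel) -this
    have : iZ ≫ (pY ≫ iY) = 0 := by rw [hY2]; exact h1
    have h2 : (iZ ≫ pY) ≫ iY = 0 := by rw [Category.assoc]; exact this
    have : Mono iY := by
      constructor
      intro W a b hab
      have : a ≫ iY ≫ pY = b ≫ iY ≫ pY := by
        rw [← Category.assoc, ← Category.assoc, hab]
      simpa [hY1] using this
    exact (cancel_mono iY).mp (by simpa using h2)
  -- A ≅ Y ⊞ Z
  have hiso : A ≅ Y ⊞ Z := by
    refine ⟨biprod.lift pY pZ, biprod.desc iY iZ, ?_, ?_⟩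
    · rw [biprod.lift_desc, hY2, hZ2]; abel
    · apply biprod.hom_ext'
      · apply biprod.hom_ext <;> simp [hY1, hZ1, hiYp, hiZp]
      · apply biprod.hom_ext <;> simp [hY1, hZ1, hiYp, hiZp]
  rcases hA.2 Y Z hiso with hz | hz
  · left
    rw [← hY2]
    have : iY = 0 := hz.eq_of_src iY _
    rw [this]; simp
  · right
    have : iZ = 0 := hz.eq_of_src iZ _
    have h0 : 𝟙 A - e = 0 := by rw [← hZ2, this]; simp
    linear_combination (norm := abel) -h0

/-- If `a ≫ b = 𝟙 X` with `Y` indecomposable and `X` nonzero, then also `b ≫ a = 𝟙 Y`. -/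
theorem comp_eq_id_of_indec {X Y : 𝒜} (a : X ⟶ Y) (b : Y ⟶ X) (hab : a ≫ b = 𝟙 X)
    (hY : Indecomposable Y) (hXnz : ¬IsZero X) : b ≫ a = 𝟙 Y := by
  have he : (b ≫ a) ≫ (b ≫ a) = b ≫ a := by
    calc (b ≫ a) ≫ b ≫ a = b ≫ (a ≫ b) ≫ a := by simp only [Category.assoc]
    _ = b ≫ a := by rw [hab, Category.id_comp]
  rcases idem_trivial hY _ he with h0 | h1
  · exfalso
    have hx : 𝟙 X = a ≫ (b ≫ a) ≫ b := by
      calc 𝟙 X = (a ≫ b) ≫ (a ≫ b) := by rw [hab, Category.id_comp]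
      _ = a ≫ (b ≫ a) ≫ b := by simp only [Category.assoc]
    rw [h0, zero_comp, Limits.comp_zero] at hx
    exact hXnz ((IsZero.iff_id_eq_zero X).mpr hx)
  · exact h1

end CatAux

section SES

variable {𝒜 : Type u} [Category.{v} 𝒜] [Abelian 𝒜]

theorem shortExact_pullback {M F N N' : 𝒜} (a : M ⟶ F) (b : F ⟶ N) (w : a ≫ b = 0)
    (hS : (ShortComplex.mk a b w).ShortExact) (u : N' ⟶ N) :
    (ShortComplex.mk (pullback.lift a (0 : M ⟶ N') (by rw [w, zero_comp]) : M ⟶ pullback b u)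
      (pullback.snd b u) (pullback.lift_snd _ _ _)).ShortExact := by
  haveI hmono : Mono a := hS.mono_f
  haveI hepi : Epi b := hS.epi_g
  have hk := hS.exact.fIsKernel
  refine ShortComplex.ShortExact.mk' ?_ ?_ ?_
  rotate_left
  · show Mono (pullback.lift a (0 : M ⟶ N') _ : M ⟶ pullback b u)
    have : Mono ((pullback.lift a (0 : M ⟶ N') (by rw [w, zero_comp]) : M ⟶ pullback b u)
        ≫ pullback.fst b u) := by
      rw [pullback.lift_fst]; exact hmono
    exact mono_of_mono _ (pullback.fst b u)
  · show Epi (pullback.snd b u)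
    infer_instance
  apply ShortComplex.exact_of_f_is_kernel
  refine KernelFork.IsLimit.ofι' _ _ (fun {A} t ht => ?_) (hi := ?_)
  · have h2 : (t ≫ pullback.fst b u) ≫ b = 0 := by
      rw [Category.assoc, pullback.condition, ← Category.assoc, ht, zero_comp]
    obtain ⟨z, hz⟩ := KernelFork.IsLimit.lift' hk (t ≫ pullback.fst b u) h2
    dsimp at hz
    refine ⟨z, ?_⟩
    apply pullback.hom_ext
    · rw [Category.assoc, pullback.lift_fst]; exact hz
    · rw [Category.assoc, pullback.lift_snd, comp_zero]; exact ht.symm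
  · have : Mono ((pullback.lift a (0 : M ⟶ N') (by rw [w, zero_comp]) : M ⟶ pullback b u)
        ≫ pullback.fst b u) := by
      rw [pullback.lift_fst]; exact hmono
    exact mono_of_mono _ (pullback.fst b u)

theorem shortExact_pushout {A B M' : 𝒜} (fq : A ⟶ B) [Epi fq] (ψ : kernel fq ⟶ M') :
    (ShortComplex.mk (pushout.inr (kernel.ι fq) ψ)
      (pushout.desc fq 0 (by simp) : pushout (kernel.ι fq) ψ ⟶ B)
      (pushout.inr_desc _ _ _)).ShortExact := by
  haveI : Mono (pushout.inr (kernel.ι fq) ψ) := Abelian.mono_pushout_of_mono_f _ _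
  haveI hepi : Epi (pushout.desc fq 0 (by simp) : pushout (kernel.ι fq) ψ ⟶ B) :=
    epi_of_epi_fac (pushout.inl_desc fq (0 : M' ⟶ B) (by simp))
  refine ShortComplex.ShortExact.mk' ?_ inferInstance hepi
  apply ShortComplex.exact_of_g_is_cokernel
  refine CokernelCofork.IsColimit.ofπ' _ _ (fun {W} t ht => ?_)
  have h0 : kernel.ι fq ≫ pushout.inl (kernel.ι fq) ψ ≫ t = 0 := by
    rw [← Category.assoc, pushout.condition, Category.assoc, ht, comp_zero]
  refine ⟨Abelian.epiDesc fq (pushout.inl (kernel.ι fq) ψ ≫ t) h0, ?_⟩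
  apply pushout.hom_ext
  · rw [pushout.inl_desc_assoc, Abelian.comp_epiDesc]
  · rw [pushout.inr_desc_assoc, zero_comp, ht]

/-- The key extension lemma: every map `ker f → M` extends to the source of `f`,
provided the target of `f` is a retract of a finite power of the rigid object `M`. -/
theorem ext_lemma {M : 𝒜} (C : Set 𝒜) (hM : M ∈ C)
    (hext : ∀ S : ShortComplex 𝒜, S.ShortExact → S.X₁ ∈ C → S.X₃ ∈ C → S.X₂ ∈ C)
    (hrigid : ∀ (E : 𝒜), E ∈ C → ∀ (f : M ⟶ E) (g : E ⟶ M) (w : f ≫ g = 0),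
      (ShortComplex.mk f g w).ShortExact → ∃ s : M ⟶ E, s ≫ g = 𝟙 M)
    {A B : 𝒜} (fq : A ⟶ B) [Epi fq]
    {J : Type} [Fintype J] [HasBiproduct (fun _ : J => M)]
    (sB : B ⟶ ⨁ fun _ : J => M) (rB : (⨁ fun _ : J => M) ⟶ B) (hsr : sB ≫ rB = 𝟙 B)
    (ψ : kernel fq ⟶ M) : ∃ Φ : A ⟶ M, kernel.ι fq ≫ Φ = ψ := by
  have hSES := shortExact_pushout fq ψ
  set c : pushout (kernel.ι fq) ψ ⟶ B := pushout.desc fq 0 (by simp) with hc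
  have hG := shortExact_pullback _ c _ hSES rB
  have hq : ∀ q : J, ∃ sq : M ⟶ pullback c rB,
      sq ≫ pullback.snd c rB = biproduct.ι (fun _ : J => M) q := by
    intro q
    have hGq := shortExact_pullback _ _ _ hG (biproduct.ι (fun _ : J => M) q)
    have hmem : pullback (pullback.snd c rB) (biproduct.ι (fun _ : J => M) q) ∈ C :=
      hext _ hGq hM hM
    obtain ⟨s, hs⟩ := hrigid _ hmem _ _ _ hGq
    refine ⟨s ≫ pullback.fst _ _, ?_⟩
    rw [Category.assoc, pullback.condition, ← Category.assoc, hs, Category.id_comp]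
  choose sq hsq using hq
  set σ : (⨁ fun _ : J => M) ⟶ pullback c rB := biproduct.desc sq with hσ
  have hσs : σ ≫ pullback.snd c rB = 𝟙 (⨁ fun _ : J => M) := by
    apply biproduct.hom_ext'
    intro q
    rw [hσ, ← Category.assoc, biproduct.ι_desc, hsq, Category.comp_id]
  set sec : B ⟶ pushout (kernel.ι fq) ψ := sB ≫ σ ≫ pullback.fst c rB with hsec
  have hsecc : sec ≫ c = 𝟙 B := by
    rw [hsec, Category.assoc, Category.assoc, pullback.condition, ← Category.assoc σ,
      hσs, Category.id_comp, hsr]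
  have split := ShortComplex.Splitting.ofExactOfSection _ hSES.exact sec hsecc hSES.mono_f
  refine ⟨pushout.inl (kernel.ι fq) ψ ≫ split.r, ?_⟩
  rw [← Category.assoc, pushout.condition, Category.assoc]
  have := split.f_r
  dsimp at this
  rw [this, Category.comp_id]

end SES

section FinDim

variable {k : Type v} [Field k] {𝒜 : Type u} [Category.{v} 𝒜] [Abelian 𝒜]
  [CategoryTheory.Linear k 𝒜]

theorem findim_of_retract {A B : 𝒜} (s : A ⟶ B) (r : B ⟶ A) (h : s ≫ r = 𝟙 A)
    [FiniteDimensional k (B ⟶ B)] : FiniteDimensional k (A ⟶ A) := by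
  let f : (A ⟶ A) →ₗ[k] (B ⟶ B) :=
    { toFun := fun γ => r ≫ γ ≫ s
      map_add' := fun x y => by
        simp [Preadditive.add_comp, Preadditive.comp_add]
      map_smul' := fun c x => by
        simp [CategoryTheory.Linear.smul_comp, CategoryTheory.Linear.comp_smul] }
  have hx : ∀ z : A ⟶ A, s ≫ (r ≫ z ≫ s) ≫ r = z := by
    intro z
    calc s ≫ (r ≫ z ≫ s) ≫ r = (s ≫ r) ≫ z ≫ (s ≫ r) := by simp only [Category.assoc]
    _ = z := by rw [h, Category.id_comp, Category.comp_id]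
  refine FiniteDimensional.of_injective f ?_
  intro x y hxy
  have h2 : s ≫ (r ≫ x ≫ s) ≫ r = s ≫ (r ≫ y ≫ s) ≫ r :=
    congrArg (fun t => s ≫ t ≫ r) hxy
  rw [hx, hx] at h2
  exact h2

theorem findim_biproduct_End {M : 𝒜} [FiniteDimensional k (M ⟶ M)]
    {J : Type} [Fintype J] [HasBiproduct (fun _ : J => M)] :
    FiniteDimensional k ((⨁ fun _ : J => M) ⟶ (⨁ fun _ : J => M)) := by
  let f : ((⨁ fun _ : J => M) ⟶ (⨁ fun _ : J => M)) →ₗ[k] (J → J → (M ⟶ M)) :=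
    { toFun := fun g a b => biproduct.ι (fun _ : J => M) a ≫ g ≫ biproduct.π (fun _ : J => M) b
      map_add' := fun x y => by
        funext a b
        simp [Preadditive.add_comp, Preadditive.comp_add]
      map_smul' := fun c x => by
        funext a b
        simp [CategoryTheory.Linear.smul_comp, CategoryTheory.Linear.comp_smul] }
  refine FiniteDimensional.of_injective f ?_
  intro x y hxy
  apply biproduct.hom_ext'
  intro a
  apply biproduct.hom_ext
  intro b
  have := congrFun (congrFun hxy a) b
  simpa [f] using this

end FinDim

section Part2

variable {𝒜 : Type u} [Category.{v} 𝒜] [Abelian 𝒜]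

/-- The kernel of restriction is the image of maps factoring through `fB`. -/
theorem ker_rres {M B B' : 𝒜} (fB : B ⟶ B') [Epi fB] :
    LinearMap.ker (precompLM (M := M) (kernel.ι fB)) =
      LinearMap.range (precompLM (M := M) fB) := by
  ext φ
  constructor
  · intro hφ
    have h0 : kernel.ι fB ≫ φ = 0 := hφ
    exact ⟨Abelian.epiDesc fB φ h0, Abelian.comp_epiDesc fB φ h0⟩
  · rintro ⟨h, rfl⟩
    show kernel.ι fB ≫ fB ≫ h = 0
    rw [← Category.assoc, kernel.condition, zero_comp]

theorem submodule_top_of_unit {A M : 𝒜} (ιA : A ⟶ M) (πA : M ⟶ A) (hA : ιA ≫ πA = 𝟙 A)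
    (N : Submodule (End M) (A ⟶ M)) (x : A ⟶ M) (hx : x ∈ N)
    (hunit : IsUnit (asEnd (x ≫ πA))) : N = ⊤ := by
  rw [eq_top_iff]
  rintro φ -
  obtain ⟨U, hU⟩ := hunit
  have hdv : (x ≫ πA) ≫ (↑U⁻¹ : End A) = 𝟙 A := by
    have := U.inv_mul
    rw [End.mul_def] at this
    rw [hU] at this
    exact this
  have hφ : φ = (asEnd (πA ≫ (↑U⁻¹ : End A) ≫ φ) : End M) • x := by
    rw [homEnd_smul_def]
    calc φ = 𝟙 A ≫ φ := by rw [Category.id_comp]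
    _ = ((x ≫ πA) ≫ (↑U⁻¹ : End A)) ≫ φ := by rw [hdv]
    _ = x ≫ πA ≫ (↑U⁻¹ : End A) ≫ φ := by simp only [Category.assoc]
  rw [hφ]
  exact N.smul_mem _ hx

theorem submodule_loc {A M : 𝒜} (ιA : A ⟶ M) (πA : M ⟶ A) (hA : ιA ≫ πA = 𝟙 A)
    (hdich : ∀ d : End A, IsNilpotent d ∨ IsUnit d)
    (N₁ N₂ : Submodule (End M) (A ⟶ M)) (hsup : N₁ ⊔ N₂ = ⊤) : N₁ = ⊤ ∨ N₂ = ⊤ := by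
  have hmem : ιA ∈ N₁ ⊔ N₂ := by rw [hsup]; trivial
  obtain ⟨x₁, hx₁, x₂, hx₂, hsum⟩ := Submodule.mem_sup.mp hmem
  have hone : asEnd (x₁ ≫ πA) + asEnd (x₂ ≫ πA) = 1 := by
    show x₁ ≫ πA + x₂ ≫ πA = 𝟙 A
    rw [← Preadditive.add_comp, hsum, hA]
  have : IsUnit (asEnd (x₁ ≫ πA)) ∨ IsUnit (asEnd (x₂ ≫ πA)) := by
    by_contra hc
    push_neg at hc
    exact (aux_nonunit_add hdich hc.1 hc.2) (by rw [hone]; exact isUnit_one)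
  rcases this with h | h
  · exact Or.inl (submodule_top_of_unit ιA πA hA N₁ x₁ hx₁ h)
  · exact Or.inr (submodule_top_of_unit ιA πA hA N₂ x₂ hx₂ h)

theorem end_dichotomy {k : Type v} [Field k] [CategoryTheory.Linear k 𝒜]
    {A : 𝒜} (hA : Indecomposable A) [FiniteDimensional k (A ⟶ A)] :
    ∀ d : End A, IsNilpotent d ∨ IsUnit d := by
  have : Nontrivial (End A) := by
    refine ⟨⟨1, 0, fun h => hA.1 ?_⟩⟩
    rw [IsZero.iff_id_eq_zero]
    exact h
  have hfd : FiniteDimensional k (End A) := inferInstanceAs (FiniteDimensional k (A ⟶ A))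
  intro d
  refine aux_nilpotent_or_unit (k := k) ?_ d
  intro e he
  have : e ≫ e = e := by rw [← End.mul_def]; exact he
  exact idem_trivial hA e this

/-- An indecomposable retract of a finite biproduct is isomorphic to one of the summands. -/
theorem retract_iso_of_indec {N : 𝒜} {J : Type} [Fintype J] (F : J → 𝒜) [HasBiproduct F]
    (s : N ⟶ ⨁ F) (r : (⨁ F) ⟶ N) (hsr : s ≫ r = 𝟙 N)
    (hN : Indecomposable N) (hFind : ∀ q, Indecomposable (F q))
    (hdich : ∀ d : End N, IsNilpotent d ∨ IsUnit d) : ∃ q : J, Nonempty (F q ≅ N) := by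
  set u : J → End N := fun q => s ≫ biproduct.π F q ≫ biproduct.ι F q ≫ r with hu
  have htot : (𝟙 N : N ⟶ N) = ∑ q : J, u q := by
    calc (𝟙 N : N ⟶ N) = s ≫ r := hsr.symm
    _ = s ≫ 𝟙 (⨁ F) ≫ r := by rw [Category.id_comp]
    _ = s ≫ (∑ q : J, biproduct.π F q ≫ biproduct.ι F q) ≫ r := by rw [biproduct.total]
    _ = ∑ q : J, s ≫ biproduct.π F q ≫ biproduct.ι F q ≫ r := by
        rw [Preadditive.sum_comp, Preadditive.comp_sum]
        simp only [Category.assoc]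
  have hNnz : ¬IsZero N := hN.1
  have hunit : ∃ q : J, IsUnit (u q) := by
    by_contra hc
    push_neg at hc
    have hnontriv : Nontrivial (End N) := by
      refine ⟨⟨1, 0, fun h => hNnz ?_⟩⟩
      rw [IsZero.iff_id_eq_zero]
      exact h
    have h2 := aux_nonunit_sum hdich Finset.univ u (fun q _ => hc q)
    apply h2
    rw [← htot]
    exact isUnit_one
  obtain ⟨q, ⟨U, hU⟩⟩ := hunit
  have hUinv : u q ≫ (↑U⁻¹ : End N) = 𝟙 N := by
    have h := U.inv_mul
    rw [End.mul_def, hU] at h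
    exact h
  have habB : (s ≫ biproduct.π F q) ≫ ((biproduct.ι F q ≫ r) ≫ (↑U⁻¹ : End N)) = 𝟙 N := by
    have h2 : u q ≫ (↑U⁻¹ : End N) =
        (s ≫ biproduct.π F q) ≫ ((biproduct.ι F q ≫ r) ≫ (↑U⁻¹ : End N)) := by
      rw [hu]
      simp only [Category.assoc]
    rw [← h2, hUinv]
  have := comp_eq_id_of_indec (s ≫ biproduct.π F q)
    ((biproduct.ι F q ≫ r) ≫ (↑U⁻¹ : End N)) habB (hFind q) hNnz
  exact ⟨q, ⟨⟨(biproduct.ι F q ≫ r) ≫ (↑U⁻¹ : End N), s ≫ biproduct.π F q, this, habB⟩⟩⟩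

/-- Any surjection from `Hom(A, M)` onto `Hom(ker f_B, M)` yields an isomorphism `B ≅ A`,
together with an explicit description of the surjection. -/
theorem f4a {M A B B' : 𝒜}
    (ιA : A ⟶ M) (πA : M ⟶ A) (hA : ιA ≫ πA = 𝟙 A)
    (ιB : B ⟶ M) (πB : M ⟶ B) (hB : ιB ≫ πB = 𝟙 B)
    (hindA : Indecomposable A) (hBnz : ¬IsZero B)
    (hdichB : ∀ d : End B, IsNilpotent d ∨ IsUnit d)
    (fB : B ⟶ B') [Epi fB]
    (hEXT : ∀ ψ : kernel fB ⟶ M, ∃ Φ : B ⟶ M, kernel.ι fB ≫ Φ = ψ)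
    (hTB : (LinearMap.range (precompLM fB : (B' ⟶ M) →ₗ[End M] (B ⟶ M))) ≠ ⊤)
    (θ : (A ⟶ M) →ₗ[End M] (kernel fB ⟶ M)) (hθ : Function.Surjective θ) :
    ∃ (d : B ⟶ A) (e : A ⟶ B), d ≫ e = 𝟙 B ∧ e ≫ d = 𝟙 A ∧
      ∀ φ : A ⟶ M, θ φ = (kernel.ι fB ≫ d) ≫ φ := by
  have hrep : ∀ φ : A ⟶ M, θ φ = (θ ιA ≫ πA) ≫ φ := by
    intro φ
    rw [rep_of_linear ιA πA hA θ φ, homEnd_smul_def]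
    simp only [Category.assoc]
  obtain ⟨Φ, hΦ⟩ := hEXT ((θ ιA ≫ πA) ≫ ιA)
  set d : B ⟶ A := Φ ≫ πA with hd0
  have hd : kernel.ι fB ≫ d = θ ιA ≫ πA := by
    rw [hd0, ← Category.assoc, hΦ, Category.assoc, hA, Category.comp_id]
  have hLθ : ∀ φ : A ⟶ M, precompLM (M := M) (kernel.ι fB) (precompLM d φ) = θ φ := by
    intro φ
    rw [hrep, ← hd]
    simp only [precompLM_apply, Category.assoc]
  have hsup : LinearMap.range (precompLM d (M := M)) ⊔
      LinearMap.range (precompLM fB (M := M)) = ⊤ := by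
    rw [eq_top_iff]
    rintro x -
    obtain ⟨φ, hφ⟩ := hθ (precompLM (M := M) (kernel.ι fB) x)
    have hker : x - precompLM d φ ∈ LinearMap.range (precompLM fB (M := M)) := by
      rw [← ker_rres fB]
      rw [LinearMap.mem_ker, map_sub, hLθ, hφ, sub_self]
    have : x = precompLM d φ + (x - precompLM d φ) := by abel
    rw [this]
    exact Submodule.add_mem_sup (LinearMap.mem_range_self _ _) hker
  have hrange : LinearMap.range (precompLM d (M := M)) = ⊤ := by
    rcases submodule_loc ιB πB hB hdichB _ _ hsup with h | h
    · exact h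
    · exact absurd h hTB
  obtain ⟨φ₀, hφ₀⟩ : ∃ φ₀ : A ⟶ M, d ≫ φ₀ = ιB := by
    have : ιB ∈ LinearMap.range (precompLM d (M := M)) := by rw [hrange]; trivial
    obtain ⟨φ₀, hφ₀⟩ := this
    exact ⟨φ₀, hφ₀⟩
  set e : A ⟶ B := φ₀ ≫ πB with he0
  have hde : d ≫ e = 𝟙 B := by
    rw [he0, ← Category.assoc, hφ₀, hB]
  have hed : e ≫ d = 𝟙 A := comp_eq_id_of_indec d e hde hindA hBnz
  refine ⟨d, e, hde, hed, ?_⟩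
  intro φ
  rw [hrep, ← hd]

theorem f4b {M A A' : 𝒜} (fA : A ⟶ A') [Epi fA]
    (d : A ⟶ A) (e : A ⟶ A) (hde : d ≫ e = 𝟙 A) (hed : e ≫ d = 𝟙 A)
    (happroxA : ∀ g : A ⟶ A', ∃ h : A' ⟶ A', fA ≫ h = g)
    (θ : (A ⟶ M) →ₗ[End M] (kernel fA ⟶ M))
    (hrepr : ∀ φ : A ⟶ M, θ φ = (kernel.ι fA ≫ d) ≫ φ) :
    LinearMap.ker θ = LinearMap.range (precompLM fA (M := M)) := by
  ext φ
  have hkey : θ φ = 0 ↔ precompLM d φ ∈ LinearMap.range (precompLM fA (M := M)) := by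
    rw [← ker_rres fA, LinearMap.mem_ker]
    constructor
    · intro h
      show kernel.ι fA ≫ d ≫ φ = 0
      rw [← Category.assoc, ← hrepr φ]; exact h
    · intro h
      rw [hrepr φ, Category.assoc]
      exact h
  rw [LinearMap.mem_ker, hkey]
  constructor
  · rintro ⟨h, hh⟩
    obtain ⟨h₁, hh₁⟩ := happroxA (e ≫ fA)
    have : φ = e ≫ d ≫ φ := by
      rw [← Category.assoc, hed, Category.id_comp]
    have hh' : fA ≫ h = d ≫ φ := hh
    refine ⟨h₁ ≫ h, ?_⟩
    show fA ≫ h₁ ≫ h = φ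
    rw [this, ← hh', ← Category.assoc, hh₁, Category.assoc]
  · rintro ⟨h, hh⟩
    obtain ⟨h₂, hh₂⟩ := happroxA (d ≫ fA)
    have hh' : fA ≫ h = φ := hh
    refine ⟨h₂ ≫ h, ?_⟩
    show fA ≫ h₂ ≫ h = d ≫ φ
    rw [← hh', ← Category.assoc, hh₂, Category.assoc]

/-- Composing biproduct maps. -/
theorem biproduct_map_comp {J : Type} [Fintype J] (F G H : J → 𝒜)
    [HasBiproduct F] [HasBiproduct G] [HasBiproduct H]
    (p : ∀ q, F q ⟶ G q) (w : ∀ q, G q ⟶ H q) :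
    biproduct.map p ≫ biproduct.map w = biproduct.map (fun q => p q ≫ w q) := by
  apply biproduct.hom_ext
  intro q
  simp [biproduct.map_π]

theorem biproduct_map_id {J : Type} [Fintype J] (F : J → 𝒜) [HasBiproduct F] :
    biproduct.map (fun q => 𝟙 (F q)) = 𝟙 (⨁ F) := by
  apply biproduct.hom_ext
  intro q
  simp [biproduct.map_π]

end Part2


section ModAux

variable {R : Type*} [Ring R] {X Y : Type*} [AddCommGroup X] [Module R X]
  [AddCommGroup Y] [Module R Y]

/-- Pulling back a pair of nested submodules along an injective map whose range contains
them gives an isomorphic subquotient. -/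
noncomputable def comapQuotEquiv (g : Y →ₗ[R] X) (hg : Function.Injective g)
    {A B : Submodule R X} (hAB : A ≤ B) (hBr : B ≤ LinearMap.range g) :
    ((↥(B.comap g)) ⧸ (Submodule.comap (B.comap g).subtype (A.comap g))) ≃ₗ[R]
      ((↥B) ⧸ (Submodule.comap B.subtype A)) := by
  have hmap : ∀ y : Y, y ∈ B.comap g → g y ∈ B := fun y hy => hy
  let eB : ↥(B.comap g) ≃ₗ[R] ↥B := by
    refine LinearEquiv.ofBijective (g.restrict hmap) ⟨?_, ?_⟩
    · intro a b hab
      apply Subtype.ext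
      apply hg
      exact congrArg Subtype.val hab
    · rintro ⟨x, hx⟩
      obtain ⟨y, rfl⟩ := hBr hx
      exact ⟨⟨y, hx⟩, rfl⟩
  refine Submodule.Quotient.equiv _ _ eB ?_
  ext ⟨x, hx⟩
  constructor
  · rintro ⟨⟨y, hy⟩, hyA, hyx⟩
    have hval : g y = x := congrArg Subtype.val hyx
    subst hval
    exact hyA
  · intro hxA
    obtain ⟨y, rfl⟩ := hBr hx
    exact ⟨⟨y, hx⟩, hxA, Subtype.ext rfl⟩

theorem top_layer_map {A B : Submodule R X} (hB : B = ⊤) (_hA : A ≤ B) :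
    ∃ L : X →ₗ[R] ((↥B) ⧸ (Submodule.comap B.subtype A)),
      Function.Surjective L ∧ LinearMap.ker L = A := by
  subst hB
  refine ⟨(Submodule.comap (⊤ : Submodule R X).subtype A).mkQ.comp
    (LinearMap.codRestrict ⊤ LinearMap.id (fun x => trivial)), ?_, ?_⟩
  · intro z
    obtain ⟨⟨x, _⟩, rfl⟩ := Submodule.mkQ_surjective _ z
    exact ⟨x, rfl⟩
  · ext x
    simp [Submodule.Quotient.mk_eq_zero]
    rfl

theorem quot_subsingleton {A B : Submodule R X} (hBA : B ≤ A) :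
    Subsingleton ((↥B) ⧸ (Submodule.comap B.subtype A)) := by
  have h : Submodule.comap B.subtype A = ⊤ := by
    rw [eq_top_iff]
    rintro x -
    exact hBA x.2
  rw [h]
  exact Submodule.Quotient.subsingleton_iff.mpr rfl

theorem range_fin_succ {α : Type*} {n : ℕ} (c : Fin (n + 1) → α) :
    Set.range c = Set.range (fun t : Fin n => c t.castSucc) ∪ {c (Fin.last n)} := by
  ext x
  constructor
  · rintro ⟨t, rfl⟩
    rcases Fin.eq_castSucc_or_eq_last t with ⟨j, rfl⟩ | rfl
    · exact Or.inl ⟨j, rfl⟩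
    · exact Or.inr rfl
  · rintro (⟨j, rfl⟩ | rfl)
    · exact ⟨j.castSucc, rfl⟩
    · exact ⟨Fin.last n, rfl⟩

end ModAux


theorem endomorphism_algebra_delta_serial
    (k : Type v) [Field k] (𝒜 : Type u) [Category.{v} 𝒜] [Abelian 𝒜]
    [CategoryTheory.Linear k 𝒜]
    (C : Set 𝒜)
    (hfin : ∀ X Y : 𝒜, X ∈ C → Y ∈ C → FiniteDimensional k (X ⟶ Y))
    (hext : ∀ S : ShortComplex 𝒜, S.ShortExact → S.X₁ ∈ C → S.X₃ ∈ C → S.X₂ ∈ C)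
    (n : ℕ) (Mi : Fin n → 𝒜) (M : 𝒜) (hM : M ∈ C) (isoM : M ≅ ⨁ Mi)
    (hind : ∀ i, Indecomposable (Mi i))
    (hpair : ∀ i j, i ≠ j → IsEmpty (Mi i ≅ Mi j))
    (hrigid : ∀ (E : 𝒜), E ∈ C → ∀ (f : M ⟶ E) (g : E ⟶ M) (w : f ≫ g = 0),
      (ShortComplex.mk f g w).ShortExact → ∃ s : M ⟶ E, s ≫ g = 𝟙 M)
    (Mi' : Fin n → 𝒜) (f : ∀ i, Mi i ⟶ Mi' i)
    (htarget : ∀ i, BelowAdd Mi i (Mi' i))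
    (happrox : ∀ i (X : 𝒜), BelowAdd Mi i X → ∀ g : Mi i ⟶ X, ∃ h : Mi' i ⟶ X, f i ≫ h = g)
    (hmin : ∀ i (g : Mi' i ⟶ Mi' i), f i ≫ g = f i → IsIso g)
    (hsurj : ∀ i, Epi (f i))
    (hgl : ∃ d, ∀ D : ModuleCat.{v} (End M), pdLE (End M) d D)
    -- each approximation target Mᵢ' is indecomposable or zero :
    (hindtarget : ∀ i, IsZero (Mi' i) ∨ Indecomposable (Mi' i)) :
    -- Γ is Δ-serial : each indecomposable projective Hom_C(Mᵢ, M) has a unique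
    -- Δ-composition series, where Δⱼ = Hom_C(Ker fⱼ, M) :
    ∀ i : Fin n, ∀ (m m' : ℕ)
      (c : Fin (m + 1) → Submodule (End M) (ModuleCat.of (End M) (Mi i ⟶ M)))
      (c' : Fin (m' + 1) → Submodule (End M) (ModuleCat.of (End M) (Mi i ⟶ M))),
      IsDeltaFiltration (fun j => ModuleCat.of (End M) (kernel (f j) ⟶ M)) c →
      IsDeltaFiltration (fun j => ModuleCat.of (End M) (kernel (f j) ⟶ M)) c' →
      m = m' ∧ Set.range c = Set.range c' := by
  classical
  -- retract structure
  set ιf : ∀ i, Mi i ⟶ M := fun i => biproduct.ι Mi i ≫ isoM.inv with hιf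
  set πf : ∀ i, M ⟶ Mi i := fun i => isoM.hom ≫ biproduct.π Mi i with hπf
  have hιπ : ∀ i, ιf i ≫ πf i = 𝟙 (Mi i) := by
    intro i
    rw [hιf, hπf]
    simp
  haveI FDM : FiniteDimensional k (M ⟶ M) := hfin M M hM hM
  have FDA : ∀ i, FiniteDimensional k (Mi i ⟶ Mi i) := fun i =>
    findim_of_retract (k := k) (ιf i) (πf i) (hιπ i)
  have DICHi : ∀ i (d : End (Mi i)), IsNilpotent d ∨ IsUnit d := fun i => by
    haveI := FDA i
    exact end_dichotomy (k := k) (hind i)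
  have hMnz : ∀ i, ¬IsZero (Mi i) := fun i => (hind i).1
  -- biproduct retract composition
  have hmapsr : ∀ (i0 : Fin n) (m0 : ℕ),
      (biproduct.map fun q : Fin m0 × {j : Fin n // j < i0} => ιf q.2.1) ≫
        (biproduct.map fun q => πf q.2.1) = 𝟙 _ := by
    intro i0 m0
    rw [biproduct_map_comp]
    have he : (fun q : Fin m0 × {j : Fin n // j < i0} => ιf q.2.1 ≫ πf q.2.1) =
        fun q : Fin m0 × {j : Fin n // j < i0} => 𝟙 (Mi q.2.1) := funext fun q => hιπ _
    rw [he, biproduct_map_id]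
  -- dichotomy for indecomposable targets
  have DICHMi' : ∀ i0, Indecomposable (Mi' i0) → ∀ d : End (Mi' i0), IsNilpotent d ∨ IsUnit d := by
    intro i0 hdec
    obtain ⟨m0, s0, r0, hsr0⟩ := htarget i0
    haveI : FiniteDimensional k
        ((⨁ fun _ : Fin m0 × {j : Fin n // j < i0} => M) ⟶
          (⨁ fun _ : Fin m0 × {j : Fin n // j < i0} => M)) :=
      findim_biproduct_End (k := k)
    haveI : FiniteDimensional k
        ((⨁ fun q : Fin m0 × {j : Fin n // j < i0} => Mi q.2.1) ⟶
          (⨁ fun q : Fin m0 × {j : Fin n // j < i0} => Mi q.2.1)) :=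
      findim_of_retract (k := k) (biproduct.map fun q => ιf q.2.1)
        (biproduct.map fun q => πf q.2.1) (hmapsr i0 m0)
    haveI : FiniteDimensional k (Mi' i0 ⟶ Mi' i0) := findim_of_retract (k := k) s0 r0 hsr0
    exact end_dichotomy (k := k) hdec
  -- the extension lemma
  have EXT : ∀ j (ψ : kernel (f j) ⟶ M), ∃ Φ : Mi j ⟶ M, kernel.ι (f j) ≫ Φ = ψ := by
    intro j ψ
    haveI := hsurj j
    obtain ⟨m0, s0, r0, hsr0⟩ := htarget j
    refine ext_lemma C hM hext hrigid (f j)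
      (s0 ≫ biproduct.map fun q => ιf q.2.1)
      ((biproduct.map fun q => πf q.2.1) ≫ r0) ?_ ψ
    calc (s0 ≫ biproduct.map fun q => ιf q.2.1) ≫ (biproduct.map fun q => πf q.2.1) ≫ r0
        = s0 ≫ ((biproduct.map fun q => ιf q.2.1) ≫ biproduct.map fun q => πf q.2.1) ≫ r0 := by
          simp only [Category.assoc]
      _ = s0 ≫ 𝟙 _ ≫ r0 := by rw [hmapsr j m0]
      _ = 𝟙 (Mi' j) := by rw [Category.id_comp, hsr0]
  -- nonvanishing of the canonical elements of the Δ's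
  have KNZ : ∀ j, kernel.ι (f j) ≫ ιf j ≠ 0 := by
    intro j h0
    haveI : Mono (ιf j ≫ πf j) := by rw [hιπ j]; infer_instance
    haveI : Mono (ιf j) := mono_of_mono (ιf j) (πf j)
    have hk0 : kernel.ι (f j) = 0 := zero_of_comp_mono (ιf j) h0
    haveI : Mono (f j) := Abelian.mono_of_kernel_ι_eq_zero _ hk0
    haveI := hsurj j
    haveI : IsIso (f j) := isIso_of_mono_of_epi (f j)
    rcases hindtarget j with hz | hdec
    · exact hMnz j (hz.of_iso (asIso (f j)))
    · obtain ⟨m0, s0, r0, hsr0⟩ := htarget j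
      obtain ⟨q, ⟨eIso⟩⟩ := retract_iso_of_indec _ s0 r0 hsr0 hdec
        (fun q => hind q.2.1) (DICHMi' j hdec)
      exact (hpair q.2.1 j (ne_of_lt q.2.2)).false (eIso.trans (asIso (f j)).symm)
  have DNZ : ∀ j, ∃ x : kernel (f j) ⟶ M, x ≠ 0 := fun j => ⟨_, KNZ j⟩
  -- T_i is proper
  have TXNE : ∀ j, LinearMap.range (precompLM (f j) : (Mi' j ⟶ M) →ₗ[End M] (Mi j ⟶ M)) ≠ ⊤ := by
    intro j h
    have : ιf j ∈ LinearMap.range (precompLM (f j) : (Mi' j ⟶ M) →ₗ[End M] (Mi j ⟶ M)) := by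
      rw [h]; trivial
    obtain ⟨hh, hhh⟩ := this
    have hhh' : f j ≫ hh = ιf j := hhh
    apply KNZ j
    rw [← hhh', ← Category.assoc, kernel.condition, zero_comp]
  -- the key structural fact about surjections onto the Δ's
  have F4 : ∀ (i j : Fin n) (θ : (Mi i ⟶ M) →ₗ[End M] (kernel (f j) ⟶ M)),
      Function.Surjective θ → j = i ∧
        LinearMap.ker θ = LinearMap.range (precompLM (f i) : (Mi' i ⟶ M) →ₗ[End M] _) := by
    intro i j θ hθ
    haveI := hsurj j
    obtain ⟨d, e, hde, hed, hrepr⟩ := f4a (ιf i) (πf i) (hιπ i) (ιf j) (πf j) (hιπ j)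
      (hind i) (hMnz j) (DICHi j) (f j) (EXT j) (TXNE j) θ hθ
    have hji : j = i := by
      by_contra hne
      exact (hpair j i hne).false ⟨d, e, hde, hed⟩
    subst hji
    exact ⟨rfl, f4b (f j) d e hde hed (fun g => happrox j (Mi' j) (htarget j) g) θ hrepr⟩
  -- nondegeneracy of filtrations
  have XNE : ∀ i : Fin n, (⊥ : Submodule (End M) (Mi i ⟶ M)) ≠ ⊤ := by
    intro i h
    have h2 : ιf i ∈ (⊥ : Submodule (End M) (Mi i ⟶ M)) := by rw [h]; trivial
    have h3 : ιf i = 0 := by simpa using h2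
    have h4 : 𝟙 (Mi i) = 0 := by rw [← hιπ i, h3, zero_comp]
    exact hMnz i ((IsZero.iff_id_eq_zero (Mi i)).mpr h4)
  have POS : ∀ (i : Fin n) (mm : ℕ)
      (c : Fin (mm + 1) → Submodule (End M) (ModuleCat.of (End M) (Mi i ⟶ M))),
      IsDeltaFiltration (fun j => ModuleCat.of (End M) (kernel (f j) ⟶ M)) c → 0 < mm := by
    intro i mm c hc
    rcases Nat.eq_zero_or_pos mm with h0 | h; swap
    · exact h
    · exfalso
      subst h0
      apply XNE i
      have hb : c 0 = ⊥ := hc.2.1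
      have ht : c (Fin.last 0) = ⊤ := hc.2.2.1
      rw [← hb, ← ht]
      rfl
  -- main induction on the length of the filtration
  have MAIN : ∀ (bound : ℕ) (i : Fin n) (m₁ m₂ : ℕ)
      (c₁ : Fin (m₁ + 1) → Submodule (End M) (ModuleCat.of (End M) (Mi i ⟶ M)))
      (c₂ : Fin (m₂ + 1) → Submodule (End M) (ModuleCat.of (End M) (Mi i ⟶ M))),
      m₁ ≤ bound →
      IsDeltaFiltration (fun j => ModuleCat.of (End M) (kernel (f j) ⟶ M)) c₁ →
      IsDeltaFiltration (fun j => ModuleCat.of (End M) (kernel (f j) ⟶ M)) c₂ →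
      m₁ = m₂ ∧ Set.range c₁ = Set.range c₂ := by
    intro bound
    induction bound with
    | zero =>
      intro i m₁ m₂ c₁ c₂ hm₁ h₁ h₂
      exact absurd (POS i m₁ c₁ h₁) (by omega)
    | succ bound ih =>
      intro i m₁ m₂ c₁ c₂ hm₁ h₁ h₂
      obtain ⟨n₁, rfl⟩ : ∃ n₁, m₁ = n₁ + 1 := ⟨m₁ - 1, by have := POS i m₁ c₁ h₁; omega⟩
      obtain ⟨n₂, rfl⟩ : ∃ n₂, m₂ = n₂ + 1 := ⟨m₂ - 1, by have := POS i m₂ c₂ h₂; omega⟩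
      -- analyze the top layer of a filtration
      have TOP : ∀ (nn : ℕ)
          (c : Fin (nn + 1 + 1) → Submodule (End M) (ModuleCat.of (End M) (Mi i ⟶ M))),
          IsDeltaFiltration (fun j => ModuleCat.of (End M) (kernel (f j) ⟶ M)) c →
          c ((Fin.last nn).castSucc) =
            LinearMap.range (precompLM (f i) : (Mi' i ⟶ M) →ₗ[End M] _) := by
        intro nn c hc
        obtain ⟨j₁, ⟨E₁⟩⟩ := hc.2.2.2 (Fin.last nn)
        have hBtop : c ((Fin.last nn).succ) = ⊤ := by rw [Fin.succ_last]; exact hc.2.2.1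
        have hAle : c ((Fin.last nn).castSucc) ≤ c ((Fin.last nn).succ) :=
          hc.1 (Fin.castSucc_lt_succ (i := _)).le
        obtain ⟨L₁, hL₁s, hL₁k⟩ := top_layer_map hBtop hAle
        have hθs : Function.Surjective (E₁.toLinearMap.comp L₁) := by
          rw [LinearMap.coe_comp]
          exact E₁.surjective.comp hL₁s
        have hF := F4 i j₁ (E₁.toLinearMap.comp L₁) hθs
        have hker : LinearMap.ker (E₁.toLinearMap.comp L₁) = c ((Fin.last nn).castSucc) := by
          rw [LinearMap.ker_comp, LinearMap.ker_eq_bot.mpr E₁.injective, Submodule.comap_bot,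
            hL₁k]
        rw [← hker]
        exact hF.2
      have hc₁T := TOP n₁ c₁ h₁
      have hc₂T := TOP n₂ c₂ h₂
      rcases hindtarget i with hz | hdec
      · -- `Mi' i` is zero : the filtrations have length 1
        have hTbot : LinearMap.range (precompLM (f i) : (Mi' i ⟶ M) →ₗ[End M] _) =
            (⊥ : Submodule (End M) (Mi i ⟶ M)) := by
          rw [eq_bot_iff]
          rintro φ ⟨h, rfl⟩
          have h0 : h = 0 := hz.eq_of_src h 0
          have : precompLM (M := M) (f i) h = 0 := by rw [h0, map_zero]
          rw [this]
          exact Submodule.zero_mem ⊥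
        have hlen : ∀ (nn : ℕ)
            (c : Fin (nn + 1 + 1) → Submodule (End M) (ModuleCat.of (End M) (Mi i ⟶ M))),
            IsDeltaFiltration (fun j => ModuleCat.of (End M) (kernel (f j) ⟶ M)) c →
            c ((Fin.last nn).castSucc) = ⊥ → nn = 0 := by
          intro nn c hc hcT
          by_contra h0
          have hnn : 0 < nn := Nat.pos_of_ne_zero h0
          obtain ⟨j', ⟨E'⟩⟩ := hc.2.2.2 (⟨0, Nat.succ_pos nn⟩ : Fin (nn + 1))
          have hle : c ((⟨0, Nat.succ_pos nn⟩ : Fin (nn + 1)).succ) ≤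
              c ((Fin.last nn).castSucc) := by
            apply hc.1
            rw [Fin.le_def]
            simpa using Nat.one_le_iff_ne_zero.mpr h0
          haveI hss := quot_subsingleton
            (A := c ((⟨0, Nat.succ_pos nn⟩ : Fin (nn + 1)).castSucc))
            (B := c ((⟨0, Nat.succ_pos nn⟩ : Fin (nn + 1)).succ))
            (le_trans (hle.trans_eq hcT) bot_le)
          obtain ⟨x, hx⟩ := DNZ j'
          apply hx
          have hsym : E'.symm x = E'.symm 0 := Subsingleton.elim _ _
          calc x = E' (E'.symm x) := (E'.apply_symm_apply x).symm
            _ = E' (E'.symm 0) := congrArg E' hsym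
            _ = 0 := E'.apply_symm_apply 0
        have hn₁ : n₁ = 0 := hlen n₁ c₁ h₁ (by rw [hc₁T, hTbot])
        have hn₂ : n₂ = 0 := hlen n₂ c₂ h₂ (by rw [hc₂T, hTbot])
        subst hn₁; subst hn₂
        have hrange2 : ∀ (c : Fin (0 + 1 + 1) → Submodule (End M) (ModuleCat.of (End M) (Mi i ⟶ M))),
            IsDeltaFiltration (fun j => ModuleCat.of (End M) (kernel (f j) ⟶ M)) c →
            Set.range c = {⊥, ⊤} := by
          intro c hc
          rw [range_fin_succ c]
          have h1 : Set.range (fun t : Fin (0 + 1) => c t.castSucc) = {c 0} := by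
            ext S
            constructor
            · rintro ⟨t, rfl⟩
              have ht : t = 0 := by
                apply Fin.ext
                have := t.isLt
                omega
              subst ht
              rfl
            · rintro rfl
              exact ⟨0, rfl⟩
          rw [h1, hc.2.1, hc.2.2.1, Set.singleton_union]
        exact ⟨rfl, (hrange2 c₁ h₁).trans (hrange2 c₂ h₂).symm⟩
      · -- `Mi' i` is indecomposable : peel off the top layer and induct
        obtain ⟨m0, s0, r0, hsr0⟩ := htarget i
        obtain ⟨q, ⟨eIso⟩⟩ := retract_iso_of_indec _ s0 r0 hsr0 hdec
          (fun q => hind q.2.1) (DICHMi' i hdec)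
        haveI := hsurj i
        set l : Fin n := q.2.1 with hl0
        set g : ↑(ModuleCat.of (End M) (Mi l ⟶ M)) →ₗ[End M] ↑(ModuleCat.of (End M) (Mi i ⟶ M)) :=
          (precompLM (f i ≫ eIso.inv) : (Mi l ⟶ M) →ₗ[End M] (Mi i ⟶ M)) with hg0
        have hginj : Function.Injective g := by
          intro φ φ' hφ
          have h1 : f i ≫ eIso.inv ≫ φ = f i ≫ eIso.inv ≫ φ' := by
            have h2 : (f i ≫ eIso.inv) ≫ φ = (f i ≫ eIso.inv) ≫ φ' := hφ
            simpa only [Category.assoc] using h2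
          have h3 : eIso.inv ≫ φ = eIso.inv ≫ φ' := by
            haveI := hsurj i
            exact (cancel_epi (f i)).mp h1
          exact (cancel_epi eIso.inv).mp h3
        have hgr : LinearMap.range g =
            LinearMap.range (precompLM (f i) : (Mi' i ⟶ M) →ₗ[End M] _) := by
          ext φ
          constructor
          · rintro ⟨ψ, rfl⟩
            refine ⟨eIso.inv ≫ ψ, ?_⟩
            show f i ≫ eIso.inv ≫ ψ = (f i ≫ eIso.inv) ≫ ψ
            rw [Category.assoc]
          · rintro ⟨h, rfl⟩
            refine ⟨eIso.hom ≫ h, ?_⟩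
            show (f i ≫ eIso.inv) ≫ eIso.hom ≫ h = f i ≫ h
            simp only [Category.assoc, Iso.inv_hom_id_assoc]
        -- the restricted filtrations
        have hDF : ∀ (nn : ℕ)
            (c : Fin (nn + 1 + 1) → Submodule (End M) (ModuleCat.of (End M) (Mi i ⟶ M))),
            IsDeltaFiltration (fun j => ModuleCat.of (End M) (kernel (f j) ⟶ M)) c →
            c ((Fin.last nn).castSucc) =
              LinearMap.range (precompLM (f i) : (Mi' i ⟶ M) →ₗ[End M] _) →
            IsDeltaFiltration (fun j => ModuleCat.of (End M) (kernel (f j) ⟶ M))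
              (fun t : Fin (nn + 1) => Submodule.comap g (c t.castSucc)) := by
          intro nn c hc hcT
          have hble : ∀ t : Fin (nn + 1), c t.castSucc ≤ LinearMap.range g := by
            intro t
            rw [hgr]
            rw [← hcT]
            exact hc.1 (by rw [Fin.castSucc_le_castSucc_iff]; exact Fin.le_last t)
          refine ⟨?_, ?_, ?_, ?_⟩
          · intro a b hab
            exact Submodule.comap_mono (hc.1 (by rwa [Fin.castSucc_le_castSucc_iff]))
          · show Submodule.comap g (c ((0 : Fin (nn + 1)).castSucc)) = ⊥
            rw [Fin.castSucc_zero, hc.2.1, Submodule.comap_bot, LinearMap.ker_eq_bot.mpr hginj]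
          · show Submodule.comap g (c ((Fin.last nn).castSucc)) = ⊤
            rw [hcT, ← hgr, eq_top_iff]
            rintro x -
            exact ⟨x, rfl⟩
          · intro l'
            obtain ⟨j', ⟨E'⟩⟩ := hc.2.2.2 l'.castSucc
            refine ⟨j', ?_⟩
            have hAB : c (l'.castSucc.castSucc) ≤ c (l'.castSucc.succ) :=
              hc.1 (Fin.castSucc_lt_succ (i := _)).le
            have hBr : c (l'.castSucc.succ) ≤ LinearMap.range g := by
              have h5 : l'.castSucc.succ = l'.succ.castSucc := Fin.succ_castSucc _
              rw [h5]
              exact hble l'.succ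
            have key := Nonempty.intro ((comapQuotEquiv g hginj hAB hBr).trans E')
            rw [Fin.succ_castSucc] at key
            exact key
        have hIH := ih l n₁ n₂
          (fun t : Fin (n₁ + 1) => Submodule.comap g (c₁ t.castSucc))
          (fun t : Fin (n₂ + 1) => Submodule.comap g (c₂ t.castSucc))
          (by omega) (hDF n₁ c₁ h₁ hc₁T) (hDF n₂ c₂ h₂ hc₂T)
        obtain ⟨hn, hr⟩ := hIH
        subst hn
        refine ⟨rfl, ?_⟩
        rw [range_fin_succ c₁, range_fin_succ c₂]
        have hmapeq : ∀ (c : Fin (n₁ + 1 + 1) → Submodule (End M) (ModuleCat.of (End M) (Mi i ⟶ M)))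
            (hc : IsDeltaFiltration (fun j => ModuleCat.of (End M) (kernel (f j) ⟶ M)) c)
            (hcT : c ((Fin.last n₁).castSucc) =
              LinearMap.range (precompLM (f i) : (Mi' i ⟶ M) →ₗ[End M] _)),
            (fun t : Fin (n₁ + 1) => c t.castSucc) =
              (fun t : Fin (n₁ + 1) => Submodule.map g (Submodule.comap g (c t.castSucc))) := by
          intro c hc hcT
          funext t
          rw [Submodule.map_comap_eq]
          symm
          rw [inf_eq_right]
          rw [hgr, ← hcT]
          exact hc.1 (by rw [Fin.castSucc_le_castSucc_iff]; exact Fin.le_last t)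
        rw [hmapeq c₁ h₁ hc₁T, hmapeq c₂ h₂ hc₂T]
        have hcomp : ∀ (cc : Fin (n₁ + 1) → Submodule (End M) (ModuleCat.of (End M) (Mi l ⟶ M))),
            Set.range (fun t => Submodule.map g (cc t)) = Submodule.map g '' Set.range cc := by
          intro cc
          rw [← Set.range_comp]
          rfl
        rw [hcomp, hcomp, hr, h₁.2.2.1, h₂.2.2.1]
  intro i m m' c c' hc hc'
  exact MAIN m i m m' c c' le_rfl hc hc'
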